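/- arXiv:math/0412434 — 4 statements merged into one kernel-verified Lean document; each statement's English description precedes it below -/
import Mathlib

section
/- Let $R$ be a commutative ring, $n \ge 1$, $m \ge 2$, and let $A_1, \dots, A_m$ be $n \times n$ matrices over $R$. Let $C(A_1,\dots,A_m)$ denote the $mn \times mn$ block matrix whose $(i,i)$ block is $A_i$, whose $(i,i+1)$ block is $-I_n$ for $1 \le i \le m-1$, whose $(m,1)$ block is $-I_n$, and all of whose other blocks are zero. Then $\det C(A_1,\dots,A_m) = \det(A_m A_{m-1} \cdots A_1 - I_n)$. -/
open Matrix

private lemma det_blockTriag {R : Type*} [CommRing R] {m n : ℕ}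
    (M : Matrix (Fin m × Fin n) (Fin m × Fin n) R)
    (h : ∀ i j : Fin m × Fin n, j.1 < i.1 → M i j = 0) :
    M.det = ∏ k : Fin m, (Matrix.of fun x y => M (k, x) (k, y)).det := by
  have hb : M.BlockTriangular Prod.fst := fun i j hij => h i j hij
  rw [hb.det_fintype]
  refine Finset.prod_congr rfl fun k _ => ?_
  let e : Fin n ≃ { p : Fin m × Fin n // p.1 = k } :=
    { toFun := fun x => ⟨(k, x), rfl⟩
      invFun := fun p => p.1.2
      left_inv := fun x => rfl
      right_inv := fun p => by
        rcases p with ⟨⟨a, x⟩, hp⟩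
        subst hp; rfl }
  rw [← Matrix.det_submatrix_equiv_self e (M.toSquareBlock Prod.fst k)]
  congr 1

private def chainProd {R : Type*} [CommRing R] {n : ℕ} (A' : ℕ → Matrix (Fin n) (Fin n) R)
    (i k : ℕ) : Matrix (Fin n) (Fin n) R :=
  ((List.range' i (k - i)).map A').reverse.prod

private lemma chainProd_self {R : Type*} [CommRing R] {n : ℕ}
    (A' : ℕ → Matrix (Fin n) (Fin n) R) (i : ℕ) : chainProd A' i i = 1 := by
  simp [chainProd]

private lemma chainProd_succ {R : Type*} [CommRing R] {n : ℕ}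
    (A' : ℕ → Matrix (Fin n) (Fin n) R) {i k : ℕ} (h : i ≤ k) :
    chainProd A' i (k + 1) = A' k * chainProd A' i k := by
  have h1 : k + 1 - i = (k - i) + 1 := by omega
  have h2 : i + (k - i) = k := by omega
  rw [chainProd, h1, List.range'_concat, List.map_append, List.reverse_append]
  simp [chainProd, h2, Nat.one_mul]

private lemma detR0 {R : Type*} [CommRing R] (m : ℕ) (hm : 2 ≤ m) :
    (Matrix.of fun j i : Fin m => if (j : ℕ) = ((i : ℕ) + 1) % m then
      (if (i : ℕ) = m - 1 then (1 : R) else -1) else 0).det = 1 := by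
  obtain ⟨m', rfl⟩ : ∃ m', m = m' + 2 := ⟨m - 2, by omega⟩
  set d : Fin (m' + 2) → R := fun i => if (i : ℕ) = m' + 2 - 1 then (1 : R) else -1 with hd
  have key : (Matrix.of fun j i : Fin (m' + 2) => if (j : ℕ) = ((i : ℕ) + 1) % (m' + 2) then
      (if (i : ℕ) = m' + 2 - 1 then (1 : R) else -1) else 0)
      = ((finRotate (m' + 2)).permMatrix R)ᵀ * Matrix.diagonal d := by
    ext j i
    rw [Matrix.mul_diagonal, Matrix.transpose_apply]
    simp only [Matrix.of_apply, Equiv.Perm.permMatrix, PEquiv.toMatrix_apply,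
      Equiv.toPEquiv_apply, Option.mem_def, Option.some.injEq, finRotate_succ_apply, hd]
    have hval : ((i + 1 : Fin (m' + 2)) : ℕ) = ((i : ℕ) + 1) % (m' + 2) := by
      rw [Fin.val_add, Fin.val_one]
    have hiff : (i + 1 = j) = ((j : ℕ) = ((i : ℕ) + 1) % (m' + 2)) := by
      rw [eq_iff_iff, Fin.ext_iff, hval]
      constructor <;> omega
    simp only [hiff]
    split_ifs <;> simp
  rw [key, Matrix.det_mul, Matrix.det_transpose, Matrix.det_permutation, sign_finRotate,
    Matrix.det_diagonal]
  have hprod : ∏ i : Fin (m' + 2), d i = (-1 : R) ^ (m' + 1) := by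
    rw [← Finset.mul_prod_erase Finset.univ d (Finset.mem_univ (Fin.last (m' + 1)))]
    have h1 : d (Fin.last (m' + 1)) = 1 := by simp [hd, Fin.val_last]
    have h2 : ∀ x ∈ Finset.univ.erase (Fin.last (m' + 1)), d x = -1 := by
      intro x hx
      rw [Finset.mem_erase] at hx
      have : (x : ℕ) ≠ m' + 1 := by
        intro hxx
        exact hx.1 (by rw [Fin.ext_iff, Fin.val_last]; omega)
      simp [hd, this]
    rw [h1, one_mul, Finset.prod_congr rfl h2, Finset.prod_const,
      Finset.card_erase_of_mem (Finset.mem_univ _)]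
    simp
  rw [hprod]
  push_cast
  rw [← mul_pow, neg_mul_neg, one_mul, one_pow]


/-- Cyclic block determinant: the `m × m` block matrix with diagonal blocks
`A i`, blocks `-I` in position `(i, i+1)` (indices cyclic, so block `(m,1)` is `-I`),
and zero blocks elsewhere, has determinant `det (Aₘ Aₘ₋₁ ⋯ A₁ - I)`. -/
theorem cyclic_block_det {R : Type*} [CommRing R] (n m : ℕ) (hn : 1 ≤ n) (hm : 2 ≤ m)
    (A : Fin m → Matrix (Fin n) (Fin n) R)
    (C : Matrix (Fin m × Fin n) (Fin m × Fin n) R)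
    (hC : ∀ i j : Fin m × Fin n, C i j =
      if j.1 = i.1 then A i.1 i.2 j.2
      else if (j.1 : ℕ) = ((i.1 : ℕ) + 1) % m then (-(1 : Matrix (Fin n) (Fin n) R)) i.2 j.2
      else 0) :
    C.det = ((List.ofFn A).reverse.prod - 1).det := by
  classical
  have hm0 : 0 < m := by omega
  set A' : ℕ → Matrix (Fin n) (Fin n) R := fun t => if h : t < m then A ⟨t, h⟩ else 1 with hA'
  have hA'F : ∀ i : Fin m, A' (i : ℕ) = A i := by
    intro i; simp [hA']
  set U : Matrix (Fin m × Fin n) (Fin m × Fin n) R :=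
    Matrix.of fun q r => if (r.1 : ℕ) ≤ (q.1 : ℕ) then
      chainProd A' (r.1 : ℕ) (q.1 : ℕ) q.2 r.2 else 0 with hU
  have hUapp : ∀ (a : Fin m) (x : Fin n) (r : Fin m × Fin n), U (a, x) r =
      if (r.1 : ℕ) ≤ (a : ℕ) then chainProd A' (r.1 : ℕ) (a : ℕ) x r.2 else 0 :=
    fun _ _ _ => rfl
  set R0 : Matrix (Fin m) (Fin m) R :=
    Matrix.of fun j i => if (j : ℕ) = ((i : ℕ) + 1) % m then
      (if (i : ℕ) = m - 1 then (1 : R) else -1) else 0 with hR0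
  set Q : Matrix (Fin m × Fin n) (Fin m × Fin n) R :=
    Matrix.kroneckerMap (· * ·) R0 (1 : Matrix (Fin n) (Fin n) R) with hQ
  have hQapp : ∀ (s r : Fin m × Fin n), Q s r =
      (if (s.1 : ℕ) = ((r.1 : ℕ) + 1) % m then (if (r.1 : ℕ) = m - 1 then (1 : R) else -1) else 0)
        * (if s.2 = r.2 then (1 : R) else 0) := by
    intro s r
    simp only [hQ, hR0, Matrix.kroneckerMap_apply, Matrix.of_apply, Matrix.one_apply]
  set E : Matrix (Fin m × Fin n) (Fin m × Fin n) R :=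
    Matrix.of fun q r =>
      if (q.1 : ℕ) < m - 1 then (if q = r then (1 : R) else 0)
      else if (r.1 : ℕ) < m - 1 then -(chainProd A' ((r.1 : ℕ) + 1) m q.2 r.2)
      else chainProd A' 0 m q.2 r.2 - (if q.2 = r.2 then (1 : R) else 0) with hE
  -- entries of C * U
  have hCU : ∀ q r : Fin m × Fin n, (C * U) q r =
      if (q.1 : ℕ) < m - 1 then
        (if (r.1 : ℕ) = (q.1 : ℕ) + 1 then -(if q.2 = r.2 then (1 : R) else 0) else 0)
      else chainProd A' (r.1 : ℕ) m q.2 r.2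
        - (if (r.1 : ℕ) = 0 ∧ q.2 = r.2 then (1 : R) else 0) := by
    intro q r
    have hq1 : (q.1 : ℕ) < m := q.1.2
    have hr1 : (r.1 : ℕ) < m := r.1.2
    set w : Fin m := ⟨((q.1 : ℕ) + 1) % m, Nat.mod_lt _ hm0⟩ with hwdef
    have hwval : (w : ℕ) = ((q.1 : ℕ) + 1) % m := rfl
    have hwq : w ≠ q.1 := by
      have hv : (w : ℕ) ≠ (q.1 : ℕ) := by
        rw [hwval]
        rcases Nat.lt_or_ge ((q.1 : ℕ) + 1) m with h | h
        · rw [Nat.mod_eq_of_lt h]; omega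
        · have h' : (q.1 : ℕ) + 1 = m := by omega
          rw [h', Nat.mod_self]; omega
      exact fun h => hv (congrArg Fin.val h)
    have hsplit : (C * U) q r =
        (∑ s2, C q (q.1, s2) * U (q.1, s2) r) + ∑ s2, C q (w, s2) * U (w, s2) r := by
      rw [Matrix.mul_apply, Fintype.sum_prod_type,
        ← Finset.sum_subset (Finset.subset_univ ({q.1, w} : Finset (Fin m)))
          (fun s1 _ hs1 => Finset.sum_eq_zero fun s2 _ => by
            simp only [Finset.mem_insert, Finset.mem_singleton, not_or] at hs1
            rw [hC, if_neg hs1.1, if_neg (fun h => hs1.2 (Fin.ext h)), zero_mul]),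
        Finset.sum_pair (Ne.symm hwq)]
    have h1 : (∑ s2, C q (q.1, s2) * U (q.1, s2) r)
        = if (r.1 : ℕ) ≤ (q.1 : ℕ) then
            (A' (q.1 : ℕ) * chainProd A' (r.1 : ℕ) (q.1 : ℕ)) q.2 r.2 else 0 := by
      split_ifs with hle
      · rw [Matrix.mul_apply]
        refine Finset.sum_congr rfl fun s2 _ => ?_
        rw [hC, if_pos rfl, hA'F q.1]
        congr 1
        rw [hUapp, if_pos hle]
      · refine Finset.sum_eq_zero fun s2 _ => ?_
        rw [hUapp, if_neg hle, mul_zero]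
    have h2 : (∑ s2, C q (w, s2) * U (w, s2) r) = -U (w, q.2) r := by
      have hterm : ∀ s2, C q (w, s2) * U (w, s2) r
          = if q.2 = s2 then -U (w, s2) r else 0 := fun s2 => by
        rw [hC, if_neg hwq, if_pos hwval]
        simp only [Matrix.neg_apply, Matrix.one_apply]
        split_ifs <;> ring
      simp_rw [hterm]
      rw [Finset.sum_ite_eq Finset.univ q.2 (fun s2 => -U (w, s2) r),
        if_pos (Finset.mem_univ _)]
    rw [hsplit, h1, h2, hUapp]
    by_cases hqlast : (q.1 : ℕ) < m - 1
    · have hwv : (w : ℕ) = (q.1 : ℕ) + 1 := by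
        rw [hwval, Nat.mod_eq_of_lt (by omega)]
      rw [if_pos hqlast]
      have hmodq : ((q.1 : ℕ) + 1) % m = (q.1 : ℕ) + 1 := Nat.mod_eq_of_lt (by omega)
      rw [hwv]
      by_cases hr : (r.1 : ℕ) ≤ (q.1 : ℕ)
      · rw [if_pos hr, if_pos (by omega : (r.1 : ℕ) ≤ (q.1 : ℕ) + 1),
          if_neg (by omega : ¬(r.1 : ℕ) = (q.1 : ℕ) + 1), ← chainProd_succ A' hr]
        ring
      · rw [if_neg hr]
        by_cases hr2 : (r.1 : ℕ) = (q.1 : ℕ) + 1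
        · rw [if_pos (by omega : (r.1 : ℕ) ≤ (q.1 : ℕ) + 1), if_pos hr2]
          simp only [hr2, chainProd_self, Matrix.one_apply]
          ring
        · rw [if_neg (by omega : ¬(r.1 : ℕ) ≤ (q.1 : ℕ) + 1), if_neg hr2]
          ring
    · have hq1' : (q.1 : ℕ) = m - 1 := by omega
      have hwv : (w : ℕ) = 0 := by
        have h' : m - 1 + 1 = m := by omega
        rw [hwval, hq1', h', Nat.mod_self]
      rw [if_neg hqlast, if_pos (by omega : (r.1 : ℕ) ≤ (q.1 : ℕ))]
      have hchain : ∀ j : ℕ, j ≤ m - 1 → A' (m - 1) * chainProd A' j (m - 1)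
          = chainProd A' j m := by
        intro j hj
        have h' : m = (m - 1) + 1 := by omega
        calc A' (m - 1) * chainProd A' j (m - 1) = chainProd A' j ((m - 1) + 1) :=
              (chainProd_succ A' hj).symm
        _ = chainProd A' j m := by rw [← h']
      rw [hq1', hchain (r.1 : ℕ) (by omega)]
      have hmod0 : ((q.1 : ℕ) + 1) % m = 0 := by
        have h' : (q.1 : ℕ) + 1 = m := by omega
        rw [h', Nat.mod_self]
      rw [hwv]
      by_cases hr0 : (r.1 : ℕ) = 0
      · rw [if_pos (by omega : (r.1 : ℕ) ≤ 0)]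
        simp only [hr0, chainProd_self, Matrix.one_apply, true_and]
        ring
      · rw [if_neg (by omega : ¬(r.1 : ℕ) ≤ 0),
          if_neg (fun h => absurd h.1 hr0)]
        ring
  -- C * U * Q = E
  have hCUQ : C * U * Q = E := by
    ext q r
    have hq1 : (q.1 : ℕ) < m := q.1.2
    have hr1 : (r.1 : ℕ) < m := r.1.2
    set w' : Fin m := ⟨((r.1 : ℕ) + 1) % m, Nat.mod_lt _ hm0⟩ with hw'def
    have hw'val : (w' : ℕ) = ((r.1 : ℕ) + 1) % m := rfl
    have hterm : ∀ s : Fin m × Fin n, (C * U) q s * Q s r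
        = if s = (w', r.2) then
            (C * U) q (w', r.2) * (if (r.1 : ℕ) = m - 1 then (1 : R) else -1) else 0 := by
      rintro ⟨s1, s2⟩
      rw [hQapp]
      rcases eq_or_ne ((s1, s2) : Fin m × Fin n) ((w', r.2)) with hss | hss
      · rw [if_pos hss]
        obtain ⟨hs1, hs2⟩ := Prod.mk.injEq s1 s2 w' r.2 ▸ hss
        subst hs1; subst hs2
        rw [if_pos hw'val, if_pos rfl, mul_one]
      · rw [if_neg hss]
        rcases eq_or_ne s1 w' with h1 | h1
        · have h2 : s2 ≠ r.2 := fun h => hss (by rw [h1, h])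
          rw [if_neg h2, mul_zero, mul_zero]
        · rw [if_neg (fun h => h1 (Fin.ext h)), zero_mul, mul_zero]
    rw [Matrix.mul_apply]
    simp_rw [hterm]
    rw [Finset.sum_ite_eq' Finset.univ ((w', r.2) : Fin m × Fin n)
      (fun _ => (C * U) q (w', r.2) * (if (r.1 : ℕ) = m - 1 then (1 : R) else -1)),
      if_pos (Finset.mem_univ _)]
    have hCUw : (C * U) q (w', r.2) =
        if (q.1 : ℕ) < m - 1 then
          (if (w' : ℕ) = (q.1 : ℕ) + 1 then -(if q.2 = r.2 then (1 : R) else 0) else 0)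
        else chainProd A' (w' : ℕ) m q.2 r.2
          - (if (w' : ℕ) = 0 ∧ q.2 = r.2 then (1 : R) else 0) := hCU q (w', r.2)
    rw [hCUw]
    simp only [hE, Matrix.of_apply]
    by_cases hq : (q.1 : ℕ) < m - 1
    · rw [if_pos hq, if_pos hq]
      by_cases hrq : r.1 = q.1
      · have hw'v : (w' : ℕ) = (q.1 : ℕ) + 1 := by
          rw [hw'val, hrq, Nat.mod_eq_of_lt (by omega)]
        rw [if_pos hw'v, if_neg (by omega : ¬(r.1 : ℕ) = m - 1)]
        have hqr : (q = r) = (q.2 = r.2) := by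
          rw [eq_iff_iff, Prod.ext_iff]
          exact ⟨fun h => h.2, fun h => ⟨hrq.symm, h⟩⟩
        simp only [hqr]
        split_ifs <;> ring
      · have hne : ¬(w' : ℕ) = (q.1 : ℕ) + 1 := by
          rw [hw'val]
          have hvne : (r.1 : ℕ) ≠ (q.1 : ℕ) := fun h => hrq (Fin.ext h)
          rcases Nat.lt_or_ge ((r.1 : ℕ) + 1) m with h | h
          · rw [Nat.mod_eq_of_lt h]; omega
          · have h' : (r.1 : ℕ) + 1 = m := by omega
            rw [h', Nat.mod_self]; omega
        rw [if_neg hne, zero_mul,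
          if_neg (fun h : q = r => hrq (congrArg Prod.fst h).symm)]
    · rw [if_neg hq, if_neg hq]
      by_cases hr : (r.1 : ℕ) < m - 1
      · have hw'v : (w' : ℕ) = (r.1 : ℕ) + 1 := by
          rw [hw'val, Nat.mod_eq_of_lt (by omega)]
        rw [if_neg (by omega : ¬(r.1 : ℕ) = m - 1), if_pos hr]
        have hmodr : ((r.1 : ℕ) + 1) % m = (r.1 : ℕ) + 1 := Nat.mod_eq_of_lt (by omega)
        rw [hw'v]
        rw [if_neg (fun h => absurd h.1 (by omega))]
        ring
      · have hrv : (r.1 : ℕ) = m - 1 := by omega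
        have hw'v : (w' : ℕ) = 0 := by
          have h' : m - 1 + 1 = m := by omega
          rw [hw'val, hrv, h', Nat.mod_self]
        rw [if_pos hrv, mul_one, if_neg hr]
        have hmodr : ((r.1 : ℕ) + 1) % m = 0 := by
          have h' : (r.1 : ℕ) + 1 = m := by omega
          rw [h', Nat.mod_self]
        rw [hw'v]
        simp
  -- determinant of U
  have hUdet : U.det = 1 := by
    have htri : ∀ i j : Fin m × Fin n, j.1 < i.1 → Uᵀ i j = 0 := by
      intro i j hij
      have hlt : (j.1 : ℕ) < (i.1 : ℕ) := hij
      show (if (i.1 : ℕ) ≤ (j.1 : ℕ) then chainProd A' (i.1 : ℕ) (j.1 : ℕ) j.2 i.2 else 0) = 0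
      rw [if_neg (by omega)]
    rw [← Matrix.det_transpose U, det_blockTriag _ htri]
    refine Finset.prod_eq_one fun k _ => ?_
    have hblk : (Matrix.of fun x y => Uᵀ (k, x) (k, y)) = (1 : Matrix (Fin n) (Fin n) R) := by
      ext x y
      show (if (k : ℕ) ≤ (k : ℕ) then chainProd A' (k : ℕ) (k : ℕ) y x else 0)
        = (1 : Matrix (Fin n) (Fin n) R) x y
      rw [if_pos le_rfl, chainProd_self, Matrix.one_apply, Matrix.one_apply]
      by_cases hxy : x = y
      · simp [hxy]
      · simp [hxy, Ne.symm hxy]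
    rw [hblk, Matrix.det_one]
  -- determinant of Q
  have hQdet : Q.det = 1 := by
    rw [hQ, Matrix.det_kronecker, Matrix.det_one, one_pow, mul_one, hR0, detR0 m hm, one_pow]
  -- determinant of E
  have hEdet : E.det = (chainProd A' 0 m - 1).det := by
    have hEentry : ∀ (k : Fin m) (x y : Fin n), Eᵀ (k, x) (k, y) =
        if (k : ℕ) < m - 1 then (if ((k, y) : Fin m × Fin n) = (k, x) then (1 : R) else 0)
        else if (k : ℕ) < m - 1 then -(chainProd A' ((k : ℕ) + 1) m y x)
        else chainProd A' 0 m y x - (if y = x then (1 : R) else 0) := fun k x y => rfl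
    have htri : ∀ i j : Fin m × Fin n, j.1 < i.1 → Eᵀ i j = 0 := by
      intro i j hij
      have hlt : (j.1 : ℕ) < (i.1 : ℕ) := hij
      have hj : (j.1 : ℕ) < m - 1 := by have := i.1.2; omega
      have hji : ¬(j = i) := fun h => by rw [h] at hlt; omega
      show (if (j.1 : ℕ) < m - 1 then (if j = i then (1 : R) else 0)
        else if (i.1 : ℕ) < m - 1 then -(chainProd A' ((i.1 : ℕ) + 1) m j.2 i.2)
        else chainProd A' 0 m j.2 i.2 - (if j.2 = i.2 then (1 : R) else 0)) = 0
      rw [if_pos hj, if_neg hji]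
    rw [← Matrix.det_transpose E, det_blockTriag _ htri]
    have hlast : ((⟨m - 1, by omega⟩ : Fin m) : ℕ) = m - 1 := rfl
    rw [Finset.prod_eq_single (⟨m - 1, by omega⟩ : Fin m)
      (fun k _ hk => by
        have hk' : (k : ℕ) < m - 1 := by
          have h1 := k.2
          have h2 : (k : ℕ) ≠ m - 1 := fun h => hk (Fin.ext (h.trans hlast.symm))
          omega
        have hblk : (Matrix.of fun x y => Eᵀ (k, x) (k, y))
            = (1 : Matrix (Fin n) (Fin n) R) := by
          ext x y
          rw [Matrix.of_apply, hEentry, if_pos hk', Matrix.one_apply]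
          by_cases hxy : x = y
          · simp [hxy]
          · simp [hxy, Ne.symm hxy, Prod.ext_iff]
        rw [hblk, Matrix.det_one])
      (fun h => absurd (Finset.mem_univ _) h)]
    have hblk : (Matrix.of fun x y => Eᵀ ((⟨m - 1, by omega⟩ : Fin m), x)
        ((⟨m - 1, by omega⟩ : Fin m), y)) = (chainProd A' 0 m - 1)ᵀ := by
      ext x y
      rw [Matrix.of_apply, hEentry, if_neg (by omega : ¬((⟨m - 1, by omega⟩ : Fin m) : ℕ) < m - 1),
        if_neg (by omega : ¬((⟨m - 1, by omega⟩ : Fin m) : ℕ) < m - 1),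
        Matrix.transpose_apply, Matrix.sub_apply, Matrix.one_apply]
    rw [hblk, Matrix.det_transpose]
  -- assemble
  have hmul : (C * U * Q).det = C.det * U.det * Q.det := by
    rw [Matrix.det_mul, Matrix.det_mul]
  rw [hCUQ, hEdet, hUdet, hQdet, mul_one, mul_one] at hmul
  have hlist : chainProd A' 0 m = (List.ofFn A).reverse.prod := by
    have hmap : (List.range' 0 m).map A' = List.ofFn A := by
      apply List.ext_getElem
      · simp
      · intro i h1 h2
        have hi : i < m := by simpa using h2
        simp only [List.getElem_map, List.getElem_range', List.getElem_ofFn]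
        have h3 : 0 + 1 * i = i := by omega
        rw [h3]
        simp only [hA']
        rw [dif_pos hi]
    rw [chainProd, Nat.sub_zero, hmap]
  rw [← hmul, hlist]
end

section
/- Let $R$ be a commutative ring, $m \ge 2$, let $B_1, \dots, B_m$ be $2 \times 2$ matrices over $R$ with $\det B_i = 1$ for all $i$, and let $u_1, \dots, u_m \in R$. Let $C$ be the $2m \times 2m$ block matrix whose $(i,i)$ block is $u_i B_i$, whose $(i,i+1)$ block is $-I_2$ for $1 \le i \le m-1$, whose $(m,1)$ block is $-I_2$, and all of whose other blocks are zero. Then, with $u = u_1 u_2 \cdots u_m$, one has $\det C = u^2 - \operatorname{tr}(B_m B_{m-1} \cdots B_1)\, u + 1$. -/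
open Matrix

section Aux

variable {R : Type*} [CommRing R]

/-- The cyclic block matrix `I - N` where `N` has block `A i` at block position
`(i, i-1 mod n)` (cyclically). -/
def Gmat (n : ℕ) (A : Fin n → Matrix (Fin 2) (Fin 2) R) :
    Matrix (Fin n × Fin 2) (Fin n × Fin 2) R :=
  Matrix.of fun p q =>
    (if p.1 = q.1 then (1 : Matrix (Fin 2) (Fin 2) R) p.2 q.2 else 0)
      - (if (p.1 : ℕ) = ((q.1 : ℕ) + 1) % n then A p.1 p.2 q.2 else 0)

lemma Gmat_det : ∀ (n : ℕ) (A : Fin (n + 1) → Matrix (Fin 2) (Fin 2) R),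
    (Gmat (n + 1) A).det =
      Matrix.det (1 - A 0 * (List.ofFn fun i : Fin n => A i.succ).reverse.prod) := by
  intro n
  induction n with
  | zero =>
    intro A
    have h : Gmat 1 A = ((1 : Matrix (Fin 2) (Fin 2) R) - A 0).submatrix
        (Equiv.uniqueProd (Fin 2) (Fin 1)) (Equiv.uniqueProd (Fin 2) (Fin 1)) := by
      ext p q
      have hp : p.1 = 0 := Subsingleton.elim _ _
      have hq : q.1 = 0 := Subsingleton.elim _ _
      simp [Gmat, hp, hq, Matrix.sub_apply, Equiv.uniqueProd_apply]
    rw [h, Matrix.det_submatrix_equiv_self]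
    simp
  | succ n ih =>
    intro A
    set A' : Fin (n + 1) → Matrix (Fin 2) (Fin 2) R :=
      fun i => if i = 0 then A 0 * A (Fin.last (n + 1)) else A (Fin.castSucc i) with hA'
    set e : ((Fin (n + 1) × Fin 2) ⊕ (Fin 1 × Fin 2)) ≃ (Fin (n + 2) × Fin 2) :=
      (Equiv.sumProdDistrib (Fin (n + 1)) (Fin 1) (Fin 2)).symm.trans
        (Equiv.prodCongr finSumFinEquiv (Equiv.refl (Fin 2))) with he
    have he1 : ∀ (p : Fin (n + 1)) (a : Fin 2),
        e (Sum.inl (p, a)) = (Fin.castAdd 1 p, a) := by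
      intro p a; simp [he]
    have he2 : ∀ (r : Fin 1) (a : Fin 2),
        e (Sum.inr (r, a)) = (Fin.natAdd (n + 1) r, a) := by
      intro r a; simp [he]
    set Bb : Matrix (Fin (n + 1) × Fin 2) (Fin 1 × Fin 2) R :=
      Matrix.of (fun p r => if (p.1 : ℕ) = 0 then -(A 0 p.2 r.2) else 0) with hBb
    set Cc : Matrix (Fin 1 × Fin 2) (Fin (n + 1) × Fin 2) R :=
      Matrix.of (fun r q => if (q.1 : ℕ) = n then -(A (Fin.last (n + 1)) r.2 q.2) else 0)
        with hCc
    have hBC : ∀ (p q : Fin (n + 1) × Fin 2), (Bb * Cc) p q =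
        if (p.1 : ℕ) = 0 ∧ (q.1 : ℕ) = n
          then (A 0 * A (Fin.last (n + 1))) p.2 q.2 else 0 := by
      intro p q
      rw [Matrix.mul_apply, Fintype.sum_prod_type]
      by_cases h1 : (p.1 : ℕ) = 0 <;> by_cases h2 : (q.1 : ℕ) = n <;>
        simp [hBb, hCc, h1, h2, Matrix.mul_apply] <;> simp_all <;> ring
    have hsub : (Gmat (n + 2) A).submatrix e e =
        Matrix.fromBlocks (Gmat (n + 1) A' + Bb * Cc) Bb Cc 1 := by
      ext pp qq
      rcases pp with ⟨p, a⟩ | ⟨r, a⟩ <;> rcases qq with ⟨q, b⟩ | ⟨s, b⟩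
      · rw [Matrix.submatrix_apply, he1, he1]
        simp only [Matrix.fromBlocks_apply₁₁, Matrix.add_apply, hBC, Gmat, Matrix.of_apply]
        have hq1 : (q : ℕ) < n + 1 := q.isLt
        have hp1 : (p : ℕ) < n + 1 := p.isLt
        have hmod2 : ((q : ℕ) + 1) % (n + 1 + 1) = (q : ℕ) + 1 := Nat.mod_eq_of_lt (by omega)
        have hcastv : ((Fin.castAdd 1 p : Fin (n + 2)) : ℕ) = (p : ℕ) := rfl
        have hcastq : ((Fin.castAdd 1 q : Fin (n + 2)) : ℕ) = (q : ℕ) := rfl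
        have hdiag : (Fin.castAdd 1 p = Fin.castAdd 1 q) ↔ (p = q) := by
          rw [Fin.ext_iff, Fin.ext_iff, hcastv, hcastq]
        rw [if_congr hdiag rfl rfl, hcastv, hcastq, hmod2]
        by_cases hq : (q : ℕ) = n
        · have hwrap : ((q : ℕ) + 1) % (n + 1) = 0 := by rw [hq]; simp
          have hne : ¬ ((p : ℕ) = (q : ℕ) + 1) := by omega
          rw [if_neg hne, hwrap]
          by_cases hp : (p : ℕ) = 0
          · have hA'p : A' p = A 0 * A (Fin.last (n + 1)) := by
              simp only [hA']
              rw [if_pos (show p = 0 from Fin.ext (by simpa using hp))]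
            rw [if_pos hp, if_pos (show ((p : ℕ) = 0 ∧ (q : ℕ) = n) from ⟨hp, hq⟩), hA'p]
            ring
          · rw [if_neg hp,
              if_neg (show ¬ ((p : ℕ) = 0 ∧ (q : ℕ) = n) from fun h => hp h.1)]
            ring
        · have hwrap : ((q : ℕ) + 1) % (n + 1) = (q : ℕ) + 1 := Nat.mod_eq_of_lt (by omega)
          rw [hwrap, if_neg (show ¬ ((p : ℕ) = 0 ∧ (q : ℕ) = n) from fun h => hq h.2)]
          by_cases hpq : (p : ℕ) = (q : ℕ) + 1
          · have hp0 : ¬ (p = (0 : Fin (n + 1))) := by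
              intro h
              rw [h] at hpq
              simp at hpq
            have hA'p : A' p = A (Fin.castSucc p) := by
              simp only [hA']
              rw [if_neg hp0]
            have hAc : A (Fin.castAdd 1 p) = A (Fin.castSucc p) := rfl
            rw [if_pos hpq, hA'p, hAc, if_pos hpq]
            ring
          · rw [if_neg hpq, if_neg hpq]
            ring
      · rw [Matrix.submatrix_apply, he1, he2]
        simp only [Matrix.fromBlocks_apply₁₂, hBb, Gmat, Matrix.of_apply]
        have hp1 : (p : ℕ) < n + 1 := p.isLt
        have hcastv : ((Fin.castAdd 1 p : Fin (n + 2)) : ℕ) = (p : ℕ) := rfl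
        have hv : ((Fin.natAdd (n + 1) s : Fin (n + 2)) : ℕ) = n + 1 := by
          have hs : (s : ℕ) = 0 := by have := s.isLt; omega
          simp [Fin.natAdd, hs]
        have hd : ¬ (Fin.castAdd 1 p = Fin.natAdd (n + 1) s) := by
          rw [Fin.ext_iff, hcastv, hv]
          omega
        have hmod : ((n + 1 : ℕ) + 1) % (n + 1 + 1) = 0 := Nat.mod_self _
        rw [if_neg hd, hcastv, hv, hmod]
        by_cases hp : (p : ℕ) = 0
        · have h0 : Fin.castAdd 1 p = (0 : Fin (n + 2)) := by
            apply Fin.ext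
            rw [hcastv, hp]
            rfl
          rw [if_pos hp, h0, if_pos hp]
          ring
        · rw [if_neg hp, if_neg hp]
          ring
      · rw [Matrix.submatrix_apply, he2, he1]
        simp only [Matrix.fromBlocks_apply₂₁, hCc, Gmat, Matrix.of_apply]
        have hq1 : (q : ℕ) < n + 1 := q.isLt
        have hcastq : ((Fin.castAdd 1 q : Fin (n + 2)) : ℕ) = (q : ℕ) := rfl
        have hv : ((Fin.natAdd (n + 1) r : Fin (n + 2)) : ℕ) = n + 1 := by
          have hr : (r : ℕ) = 0 := by have := r.isLt; omega
          simp [Fin.natAdd, hr]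
        have hd : ¬ (Fin.natAdd (n + 1) r = Fin.castAdd 1 q) := by
          rw [Fin.ext_iff, hcastq, hv]
          omega
        have hmod : ((q : ℕ) + 1) % (n + 1 + 1) = (q : ℕ) + 1 := Nat.mod_eq_of_lt (by omega)
        rw [if_neg hd, hcastq, hv, hmod]
        by_cases hq : (q : ℕ) = n
        · have h0 : Fin.natAdd (n + 1) r = Fin.last (n + 1) := by
            apply Fin.ext
            rw [hv, Fin.val_last]
          rw [if_pos (show (n + 1 : ℕ) = (q : ℕ) + 1 by omega), h0, if_pos hq]
          ring
        · rw [if_neg (show ¬ ((n + 1 : ℕ) = (q : ℕ) + 1) by omega), if_neg hq]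
          ring
      · rw [Matrix.submatrix_apply, he2, he2]
        simp only [Matrix.fromBlocks_apply₂₂, Gmat, Matrix.of_apply]
        have hrs : r = s := Subsingleton.elim r s
        subst hrs
        have hv : ((Fin.natAdd (n + 1) r : Fin (n + 2)) : ℕ) = n + 1 := by
          have hr : (r : ℕ) = 0 := by have := r.isLt; omega
          simp [Fin.natAdd, hr]
        have hmod : ¬ ((Fin.natAdd (n + 1) r : Fin (n + 2)) : ℕ)
            = (((Fin.natAdd (n + 1) r : Fin (n + 2)) : ℕ) + 1) % (n + 1 + 1) := by
          rw [hv]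
          simp
        rw [if_pos rfl, if_neg hmod, sub_zero]
        by_cases hab : a = b
        · subst hab
          rw [Matrix.one_apply_eq, Matrix.one_apply_eq]
        · rw [Matrix.one_apply_ne hab,
            Matrix.one_apply_ne (show ((r, a) : Fin 1 × Fin 2) ≠ (r, b) by
              simp [Prod.ext_iff, hab])]
    have hdet : (Gmat (n + 2) A).det = (Gmat (n + 1) A').det := by
      rw [← Matrix.det_submatrix_equiv_self e (Gmat (n + 2) A), hsub,
        Matrix.det_fromBlocks_one₂₂]
      congr 1
      abel
    rw [hdet, ih A']
    congr 2
    have h0 : A' 0 = A 0 * A (Fin.last (n + 1)) := by rw [hA']; simp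
    have htail : ∀ i : Fin n, A' i.succ = A (Fin.castSucc i.succ) := by
      intro i
      simp only [hA']
      rw [if_neg (Fin.succ_ne_zero i)]
    rw [h0]
    have hofn : (List.ofFn fun i : Fin (n + 1) => A i.succ) =
        (List.ofFn fun i : Fin n => A i.succ.castSucc).concat (A (Fin.last (n + 1))) := by
      rw [List.ofFn_succ' (fun i : Fin (n + 1) => A i.succ)]
      have h1 : (fun i : Fin n => A (Fin.castSucc i).succ)
          = (fun i : Fin n => A i.succ.castSucc) := by
        funext i
        exact congrArg A (Fin.ext (by simp))
      have h2 : A (Fin.last n).succ = A (Fin.last (n + 1)) := by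
        exact congrArg A (Fin.ext (by simp))
      rw [h1, h2]
    have hlist : (List.ofFn fun i : Fin n => A' i.succ)
        = (List.ofFn fun i : Fin n => A i.succ.castSucc) := by
      refine congrArg List.ofFn (funext fun i => ?_)
      exact htail i
    rw [hlist, hofn, List.concat_eq_append, List.reverse_append,
      List.reverse_singleton, List.singleton_append, List.prod_cons, mul_assoc]

lemma revprod_smul : ∀ (n : ℕ) (u : Fin n → R) (B : Fin n → Matrix (Fin 2) (Fin 2) R),
    (List.ofFn fun i => u i • B i).reverse.prod
      = (∏ i, u i) • (List.ofFn B).reverse.prod := by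
  intro n
  induction n with
  | zero => intro u B; simp
  | succ n ih =>
    intro u B
    rw [List.ofFn_succ, List.ofFn_succ (f := B), List.reverse_cons, List.reverse_cons,
      List.prod_append, List.prod_append, List.prod_singleton, List.prod_singleton,
      ih (fun i => u i.succ) (fun i => B i.succ), Fin.prod_univ_succ]
    rw [smul_mul_assoc, mul_smul_comm, smul_smul, mul_comm]

lemma det_one_sub_eq (X : Matrix (Fin 2) (Fin 2) R) :
    (1 - X).det = 1 - X.trace + X.det := by
  simp [Matrix.det_fin_two, Matrix.trace_fin_two, Matrix.sub_apply, Matrix.one_apply]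
  ring

end Aux

/-- For `2 × 2` matrices `Bᵢ` with `det Bᵢ = 1` and scalars `uᵢ`, the cyclic block
matrix with diagonal blocks `uᵢ Bᵢ`, blocks `-I₂` in positions `(i, i+1)` (cyclically,
so block `(m,1)` is `-I₂`) and zero otherwise has determinant
`u² - tr(Bₘ ⋯ B₁) u + 1` where `u = u₁ ⋯ uₘ`. -/
theorem cyclic_block_det_sl2 {R : Type*} [CommRing R] (m : ℕ) (hm : 2 ≤ m)
    (B : Fin m → Matrix (Fin 2) (Fin 2) R) (hB : ∀ i, (B i).det = 1)
    (u : Fin m → R)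
    (C : Matrix (Fin m × Fin 2) (Fin m × Fin 2) R)
    (hC : ∀ i j : Fin m × Fin 2, C i j =
      if j.1 = i.1 then u i.1 * B i.1 i.2 j.2
      else if (j.1 : ℕ) = ((i.1 : ℕ) + 1) % m then (-(1 : Matrix (Fin 2) (Fin 2) R)) i.2 j.2
      else 0) :
    C.det = (∏ i, u i) ^ 2 - ((List.ofFn B).reverse.prod).trace * (∏ i, u i) + 1 := by
  obtain ⟨k, rfl⟩ : ∃ k, m = k + 2 := ⟨m - 2, by omega⟩
  set A : Fin (k + 2) → Matrix (Fin 2) (Fin 2) R := fun i => u i • B i with hA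
  set τ : Equiv.Perm (Fin (k + 2) × Fin 2) :=
    Equiv.prodCongrLeft (fun _ : Fin 2 => finRotate (k + 2)) with hτ
  have hτap : ∀ p : Fin (k + 2) × Fin 2, τ p = (finRotate (k + 2) p.1, p.2) := by
    intro p; rfl
  have hrot : ∀ j : Fin (k + 2), ((finRotate (k + 2) j : Fin (k + 2)) : ℕ)
      = ((j : ℕ) + 1) % (k + 2) := by
    intro j
    rw [finRotate_succ_apply, Fin.val_add, Fin.val_one]
  have hCG : C.submatrix id τ = -(Gmat (k + 2) A) := by
    ext ⟨i, a⟩ ⟨j, b⟩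
    rw [Matrix.submatrix_apply, hτap, hC]
    simp only [id, Gmat, Matrix.neg_apply, Matrix.of_apply]
    have hi : (i : ℕ) < k + 2 := i.isLt
    have hj : (j : ℕ) < k + 2 := j.isLt
    have hmj : ((j : ℕ) + 1) % (k + 2) = if (j : ℕ) + 1 = k + 2 then 0 else (j : ℕ) + 1 := by
      split
      · simp [*]
      · exact Nat.mod_eq_of_lt (by omega)
    have hmi : ((i : ℕ) + 1) % (k + 2) = if (i : ℕ) + 1 = k + 2 then 0 else (i : ℕ) + 1 := by
      split
      · simp [*]
      · exact Nat.mod_eq_of_lt (by omega)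
    have hc1 : ((finRotate (k + 2) j, b).1 = i) ↔ ((i : ℕ) = ((j : ℕ) + 1) % (k + 2)) := by
      rw [Fin.ext_iff, hrot]; exact eq_comm
    have hc2 : (((finRotate (k + 2) j, b).1 : ℕ) = ((i : ℕ) + 1) % (k + 2)) ↔ (i = j) := by
      rw [hrot, Fin.ext_iff, hmi, hmj]
      constructor
      · intro h; split_ifs at h <;> omega
      · intro h; split_ifs <;> omega
    rw [if_congr hc1 rfl rfl, if_congr hc2 rfl rfl]
    by_cases h1 : (i : ℕ) = ((j : ℕ) + 1) % (k + 2)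
    · have h2 : ¬ (i = j) := by
        intro h
        rw [Fin.ext_iff] at h
        rw [hmj] at h1
        split_ifs at h1 <;> omega
      rw [if_pos h1, if_pos h1, if_neg h2]
      simp [hA]
    · rw [if_neg h1, if_neg h1]
      by_cases h2 : i = j
      · rw [if_pos h2, if_pos h2]
        simp
      · rw [if_neg h2, if_neg h2]
        simp
  have hsign : Equiv.Perm.sign τ = 1 := by
    rw [hτ, Equiv.Perm.sign_prodCongrLeft]
    rw [Finset.prod_const]
    simp [sq]
  have hdetC : C.det = (Gmat (k + 2) A).det := by
    have h1 := Matrix.det_permute' τ C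
    rw [hCG, hsign] at h1
    simp only [Units.val_one, Int.cast_one, one_mul] at h1
    rw [← h1, Matrix.det_neg]
    have hcard : Fintype.card (Fin (k + 2) × Fin 2) = (k + 2) * 2 := by simp
    rw [hcard]
    have : ((-1 : R)) ^ ((k + 2) * 2) = 1 := by
      rw [mul_comm, pow_mul, neg_one_sq, one_pow]
    rw [this, one_mul]
  rw [hdetC, Gmat_det (k + 1) A]
  set TB : Matrix (Fin 2) (Fin 2) R :=
    (List.ofFn fun i : Fin (k + 1) => B i.succ).reverse.prod with hTB
  have hX : A 0 * (List.ofFn fun i : Fin (k + 1) => A i.succ).reverse.prod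
      = (∏ i, u i) • (B 0 * TB) := by
    have : (List.ofFn fun i : Fin (k + 1) => A i.succ)
        = (List.ofFn fun i : Fin (k + 1) => (u i.succ) • (B i.succ)) := rfl
    rw [this, revprod_smul (k + 1) (fun i => u i.succ) (fun i => B i.succ)]
    have hA0 : A 0 = u 0 • B 0 := rfl
    rw [hA0, mul_smul_comm, smul_mul_assoc, smul_smul]
    congr 1
    simp only [Fin.prod_univ_succ]
    ring
  have hRP : TB * B 0 = (List.ofFn B).reverse.prod := by
    rw [List.ofFn_succ (f := B), List.reverse_cons, List.prod_append, List.prod_singleton]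
  have hdetRP : ((List.ofFn B).reverse.prod).det = 1 := by
    have h := map_list_prod (Matrix.detMonoidHom) ((List.ofFn B).reverse)
    rw [Matrix.coe_detMonoidHom] at h
    rw [h]
    rw [List.map_reverse, List.prod_reverse, List.map_ofFn, List.prod_ofFn]
    simp [Function.comp, hB]
  have hdetTB : TB.det * (B 0).det = 1 := by
    rw [← Matrix.det_mul, hRP, hdetRP]
  rw [hX, det_one_sub_eq]
  rw [Matrix.trace_smul, Matrix.det_smul]
  have htr : (B 0 * TB).trace = ((List.ofFn B).reverse.prod).trace := by
    rw [Matrix.trace_mul_comm, hRP]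
  have hd2 : (B 0 * TB).det = 1 := by
    rw [Matrix.det_mul, mul_comm, hdetTB]
  rw [htr, hd2]
  have hcard2 : Fintype.card (Fin 2) = 2 := by simp
  rw [hcard2]
  simp only [smul_eq_mul, mul_one]
  ring
end

section
/- Let $R$ be a commutative ring, $n \ge 1$, $m \ge 2$, let $B_1, \dots, B_m$ be $n \times n$ matrices over $R$, and let $u_1, \dots, u_m \in R$. Let $C$ be the $mn \times mn$ block matrix whose $(i,i)$ block is $u_i B_i$, whose $(i,i+1)$ block is $-I_n$ for $1 \le i \le m-1$, whose $(m,1)$ block is $-I_n$, and all of whose other blocks are zero. Then, with $u = u_1 \cdots u_m$ and $B = B_m B_{m-1} \cdots B_1$, one has $\det C = \det(u B - I_n)$. -/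
open Matrix

lemma aux_smul_prod {R : Type*} [CommRing R] {n : ℕ} :
    ∀ (m : ℕ) (B : Fin m → Matrix (Fin n) (Fin n) R) (u : Fin m → R),
      (List.ofFn (fun i => u i • B i)).reverse.prod
        = (∏ i, u i) • (List.ofFn B).reverse.prod := by
  intro m
  induction m with
  | zero => intro B u; simp
  | succ m ih =>
    intro B u
    rw [List.ofFn_succ, List.ofFn_succ (f := B), List.reverse_cons, List.reverse_cons,
      List.prod_append, List.prod_append, List.prod_singleton, List.prod_singleton,
      ih, Fin.prod_univ_succ, smul_mul_assoc, mul_smul_comm, smul_smul, mul_comm]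

lemma aux_block_det {R : Type*} [CommRing R] {m n : ℕ}
    (M : Matrix (Fin m × Fin n) (Fin m × Fin n) R)
    (h : ∀ q r : Fin m × Fin n, q.1 < r.1 → M q r = 0) :
    M.det = ∏ k : Fin m, (Matrix.of fun a b => M (k, a) (k, b)).det := by
  rw [← Matrix.det_transpose]
  have ht : Mᵀ.BlockTriangular Prod.fst := fun q r h' => h r q h'
  rw [ht.det_fintype]
  refine Finset.prod_congr rfl fun k _ => ?_
  let e : Fin n ≃ {x : Fin m × Fin n // x.1 = k} :=
    { toFun := fun a => ⟨(k, a), rfl⟩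
      invFun := fun x => x.1.2
      left_inv := fun a => rfl
      right_inv := fun x => Subtype.ext (Prod.ext x.2.symm rfl) }
  rw [← Matrix.det_submatrix_equiv_self e (Mᵀ.toSquareBlock Prod.fst k), ← Matrix.det_transpose]
  rfl

/-- The cyclic block matrix with diagonal blocks `uᵢ Bᵢ`, blocks `-Iₙ` in positions
`(i, i+1)` (cyclically, so block `(m,1)` is `-Iₙ`) and zero blocks otherwise has
determinant `det (u·B - Iₙ)` where `u = u₁ ⋯ uₘ` and `B = Bₘ B_{m-1} ⋯ B₁`. -/
theorem cyclic_block_det_scaled {R : Type*} [CommRing R] (n m : ℕ) (hn : 1 ≤ n) (hm : 2 ≤ m)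
    (B : Fin m → Matrix (Fin n) (Fin n) R) (u : Fin m → R)
    (C : Matrix (Fin m × Fin n) (Fin m × Fin n) R)
    (hC : ∀ i j : Fin m × Fin n, C i j =
      if j.1 = i.1 then u i.1 * B i.1 i.2 j.2
      else if (j.1 : ℕ) = ((i.1 : ℕ) + 1) % m then (-(1 : Matrix (Fin n) (Fin n) R)) i.2 j.2
      else 0) :
    C.det = ((∏ i, u i) • (List.ofFn B).reverse.prod - 1).det := by
  obtain ⟨m', rfl⟩ : ∃ m', m = m' + 1 := ⟨m - 1, by omega⟩
  have hm1 : 1 ≤ m' := by omega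
  set A : Fin (m' + 1) → Matrix (Fin n) (Fin n) R := fun i => u i • B i with hA
  set l : List (Matrix (Fin n) (Fin n) R) := List.ofFn A with hl
  set p : ℕ → Matrix (Fin n) (Fin n) R := fun k => ((l.take k).reverse).prod with hp
  have hp0 : p 0 = 1 := by simp [hp]
  have hps : ∀ (k : ℕ) (hk : k < m' + 1), p (k + 1) = A ⟨k, hk⟩ * p k := by
    intro k hk
    have hlen : k < l.length := by simp [hl, hk]
    have hget : l[k] = A ⟨k, hk⟩ := List.getElem_ofFn (f := A) (i := k) hlen
    simp [hp, List.take_succ, List.getElem?_eq_getElem hlen, hget]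
  have hpm : p (m' + 1) = (∏ i, u i) • (List.ofFn B).reverse.prod := by
    have h1 : l.take (m' + 1) = l := List.take_of_length_le (by simp [hl])
    rw [hp]
    simp only [h1, hl, hA]
    rw [List.take_of_length_le (by simp)]
    exact aux_smul_prod _ B u
  -- the unipotent column-operation matrix
  set E : Matrix (Fin (m' + 1) × Fin n) (Fin (m' + 1) × Fin n) R :=
    fun x y => if y.1 = 0 then p x.1 x.2 y.2 else if x = y then 1 else 0 with hE
  have hdetE : E.det = 1 := by
    rw [aux_block_det]
    · apply Finset.prod_eq_one
      intro k _
      have hb : (Matrix.of fun a b => E (k, a) (k, b)) = 1 := by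
        ext a b
        by_cases hk : k = (0 : Fin (m' + 1)) <;>
          simp [hE, hk, hp0, Matrix.one_apply, Prod.ext_iff]
      rw [hb, Matrix.det_one]
    · intro q r hqr
      have h1 : r.1 ≠ 0 := by
        intro h; rw [h] at hqr; exact absurd hqr (by simp [Fin.not_lt_zero]
          )
      have h2 : q ≠ r := by intro h; rw [h] at hqr; exact lt_irrefl _ hqr
      simp [hE, h1, h2]
  -- the product C * E
  set T : Matrix (Fin (m' + 1) × Fin n) (Fin (m' + 1) × Fin n) R :=
    fun q r => if r.1 = 0 then (if (q.1 : ℕ) = m' then (p (m' + 1) - 1) q.2 r.2 else 0)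
      else C q r with hT
  have hCE : C * E = T := by
    ext q r
    rw [Matrix.mul_apply]
    by_cases hr : r.1 = 0
    · -- column block 0
      set k2 : Fin (m' + 1) := ⟨((q.1 : ℕ) + 1) % (m' + 1), Nat.mod_lt _ (by omega)⟩ with hk2
      have hk2ne : k2 ≠ q.1 := by
        intro h
        have hh : ((q.1 : ℕ) + 1) % (m' + 1) = (q.1 : ℕ) := by
          rw [← Fin.val_eq_val] at h
          simpa [hk2] using h
        rcases Nat.lt_or_ge ((q.1 : ℕ) + 1) (m' + 1) with hlt | hge
        · rw [Nat.mod_eq_of_lt hlt] at hh; omega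
        · have hq : (q.1 : ℕ) = m' := by have := q.1.isLt; omega
          rw [hq] at hh
          rw [Nat.mod_self] at hh
          omega
      have hsum : ∀ x : Fin (m' + 1) × Fin n, C q x * E x r =
          (if x.1 = q.1 then (u q.1 * B q.1 q.2 x.2) * p (q.1 : ℕ) x.2 r.2 else 0)
          + (if x.1 = k2 then ((-(1 : Matrix (Fin n) (Fin n) R)) q.2 x.2) * p (k2 : ℕ) x.2 r.2
              else 0) := by
        intro x
        rw [hC q x]
        have hEx : E x r = p (x.1 : ℕ) x.2 r.2 := by simp [hE, hr]
        rw [hEx]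
        by_cases h1 : x.1 = q.1
        · rw [if_pos h1, if_pos h1, if_neg (h1 ▸ hk2ne ∘ Eq.symm), add_zero, h1]
        · rw [if_neg h1, if_neg h1, zero_add]
          by_cases h2 : x.1 = k2
          · rw [if_pos (by simp [h2, hk2]), if_pos h2, h2]
          · rw [if_neg (fun h => h2 (Fin.ext (by simpa [hk2] using h))), if_neg h2, zero_mul]
      rw [Finset.sum_congr rfl fun x _ => hsum x, Finset.sum_add_distrib,
        Fintype.sum_prod_type, Fintype.sum_prod_type]
      have e1 : ∀ k : Fin (m' + 1), (∑ c : Fin n,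
          if k = q.1 then (u q.1 * B q.1 q.2 c) * p (q.1 : ℕ) c r.2 else 0)
          = if k = q.1 then ∑ c : Fin n, (u q.1 * B q.1 q.2 c) * p (q.1 : ℕ) c r.2 else 0 := by
        intro k; split <;> simp
      have e2 : ∀ k : Fin (m' + 1), (∑ c : Fin n,
          if k = k2 then ((-(1 : Matrix (Fin n) (Fin n) R)) q.2 c) * p (k2 : ℕ) c r.2 else 0)
          = if k = k2 then
              ∑ c : Fin n, ((-(1 : Matrix (Fin n) (Fin n) R)) q.2 c) * p (k2 : ℕ) c r.2 else 0 := by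
        intro k; split <;> simp
      rw [Finset.sum_congr rfl fun k _ => e1 k, Finset.sum_congr rfl fun k _ => e2 k,
        Finset.sum_ite_eq' Finset.univ q.1, Finset.sum_ite_eq' Finset.univ k2,
        if_pos (Finset.mem_univ _), if_pos (Finset.mem_univ _)]
      have s1 : (∑ c : Fin n, (u q.1 * B q.1 q.2 c) * p (q.1 : ℕ) c r.2)
          = p ((q.1 : ℕ) + 1) q.2 r.2 := by
        rw [hps (q.1 : ℕ) q.1.isLt, Matrix.mul_apply]
        refine Finset.sum_congr rfl fun c _ => ?_
        congr 1
      have s2 : (∑ c : Fin n, ((-(1 : Matrix (Fin n) (Fin n) R)) q.2 c) * p (k2 : ℕ) c r.2)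
          = -(p (k2 : ℕ) q.2 r.2) := by
        have : (∑ c : Fin n, ((-(1 : Matrix (Fin n) (Fin n) R)) q.2 c) * p (k2 : ℕ) c r.2)
            = ((-(1 : Matrix (Fin n) (Fin n) R)) * p (k2 : ℕ)) q.2 r.2 := by
          rw [Matrix.mul_apply]
        rw [this, neg_one_mul, Matrix.neg_apply]
      rw [s1, s2]
      show _ = T q r
      rw [hT]
      simp only [if_pos hr]
      have hk2val : (k2 : ℕ) = ((q.1 : ℕ) + 1) % (m' + 1) := rfl
      by_cases hq : (q.1 : ℕ) = m'
      · rw [if_pos hq]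
        have hz : ((q.1 : ℕ) + 1) % (m' + 1) = 0 := by rw [hq, Nat.mod_self]
        rw [hk2val, hz, hq, hp0, Matrix.sub_apply, Matrix.one_apply]
        simp [Matrix.one_apply, sub_eq_add_neg]
      · rw [if_neg hq]
        have hlt : (q.1 : ℕ) + 1 < m' + 1 := by have := q.1.isLt; omega
        have hz : ((q.1 : ℕ) + 1) % (m' + 1) = (q.1 : ℕ) + 1 := Nat.mod_eq_of_lt hlt
        rw [hk2val, hz]
        ring
    · -- other columns: E acts as identity
      have hEx : ∀ x : Fin (m' + 1) × Fin n, C q x * E x r = if x = r then C q x else 0 := by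
        intro x
        have : E x r = if x = r then 1 else 0 := by simp [hE, hr]
        rw [this, mul_ite, mul_one, mul_zero]
      rw [Finset.sum_congr rfl fun x _ => hEx x, Finset.sum_ite_eq' Finset.univ r (C q),
        if_pos (Finset.mem_univ _)]
      show _ = T q r
      rw [hT]
      simp only [if_neg hr]
  have hdetT : C.det = T.det := by
    rw [← hCE, Matrix.det_mul, hdetE, mul_one]
  -- the cyclic column permutation
  set σ : Equiv.Perm (Fin (m' + 1) × Fin n) :=
    Equiv.prodCongrLeft (fun _ : Fin n => (finRotate (m' + 1) : Equiv.Perm (Fin (m' + 1)))) with hσ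
  have happ : ∀ x : Fin (m' + 1) × Fin n, σ x = (x.1 + 1, x.2) := by
    rintro ⟨i, a⟩
    simp [hσ, Equiv.prodCongrLeft_apply]
  have hsign : ((Equiv.Perm.sign σ : ℤ) : R) = (-1 : R) ^ (m' * n) := by
    rw [hσ, Equiv.Perm.sign_prodCongrLeft]
    simp only [sign_finRotate, Finset.prod_const, Finset.card_univ, Fintype.card_fin, ← pow_mul]
    push_cast
    ring
  have hTsub : (T.submatrix id σ).det = (-1 : R) ^ (m' * n) * T.det := by
    rw [Matrix.det_permute' σ T, hsign]
  have hTsub2 : (T.submatrix id σ).det = ((-1 : R) ^ n) ^ m' * (p (m' + 1) - 1).det := by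
    rw [aux_block_det]
    · rw [Fin.prod_univ_castSucc]
      congr 1
      · have hdb : ∀ k : Fin m',
            (Matrix.of fun a b => (T.submatrix id σ) (k.castSucc, a) (k.castSucc, b)).det
              = (-1 : R) ^ n := by
          intro k
          have hb : (Matrix.of fun a b => (T.submatrix id σ) (k.castSucc, a) (k.castSucc, b))
              = -(1 : Matrix (Fin n) (Fin n) R) := by
            ext a b
            simp only [Matrix.submatrix_apply, id_eq, happ, Matrix.of_apply]
            have h1 : (k.castSucc + 1 : Fin (m' + 1)) ≠ 0 := by
              intro h
              have hh := congrArg Fin.val h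
              rw [Fin.val_add_one_of_lt (Fin.castSucc_lt_last k)] at hh
              simp only [Fin.val_zero] at hh
              omega
            rw [hT]
            simp only [if_neg h1]
            rw [hC]
            have hv : ((k.castSucc + 1 : Fin (m' + 1)) : ℕ) = (k : ℕ) + 1 := by
              rw [Fin.val_add_one_of_lt (Fin.castSucc_lt_last k)]
              simp
            have hne : (k.castSucc + 1 : Fin (m' + 1)) ≠ k.castSucc := by
              intro h
              have hh := congrArg Fin.val h
              rw [hv, Fin.coe_castSucc] at hh
              omega
            rw [if_neg hne]
            rw [if_pos]
            rw [hv]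
            simp only [Fin.coe_castSucc]
            exact (Nat.mod_eq_of_lt (by have := k.isLt; omega)).symm
          rw [hb, Matrix.det_neg, Matrix.det_one, mul_one, Fintype.card_fin]
        rw [Finset.prod_congr rfl fun k _ => hdb k, Finset.prod_const, Finset.card_univ,
          Fintype.card_fin]
      · have hb : (Matrix.of fun a b =>
            (T.submatrix id σ) (Fin.last m', a) (Fin.last m', b)) = p (m' + 1) - 1 := by
          ext a b
          simp only [Matrix.submatrix_apply, id_eq, happ, Matrix.of_apply]
          have h0 : (Fin.last m' + 1 : Fin (m' + 1)) = 0 := by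
            rw [Fin.ext_iff, Fin.val_add_one]
            simp
          rw [h0, hT]
          simp
        rw [hb]
    · intro q r hqr
      simp only [Matrix.submatrix_apply, id_eq, happ]
      by_cases h0 : (r.1 + 1 : Fin (m' + 1)) = 0
      · have hrl : r.1 = Fin.last m' := by
          have h2 : r.1 + 1 = Fin.last m' + 1 := by rw [h0, Fin.last_add_one]
          exact add_right_cancel h2
        rw [h0, hT]
        have hq : ¬ ((q.1 : ℕ) = m') := by
          have hlt : (q.1 : ℕ) < (r.1 : ℕ) := hqr
          rw [hrl] at hlt
          simp only [Fin.val_last] at hlt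
          omega
        simp [hq]
      · have hrl : r.1 ≠ Fin.last m' := by
          intro h
          rw [h, Fin.last_add_one] at h0
          exact h0 rfl
        have hv : ((r.1 + 1 : Fin (m' + 1)) : ℕ) = (r.1 : ℕ) + 1 := by
          rw [Fin.val_add_one, if_neg hrl]
        rw [hT]
        simp only [if_neg h0]
        rw [hC]
        have hlt : (q.1 : ℕ) < (r.1 : ℕ) := hqr
        have h1 : (r.1 + 1 : Fin (m' + 1)) ≠ q.1 := by
          intro h
          have hh := congrArg Fin.val h
          rw [hv] at hh
          omega
        have hq1 : (q.1 : ℕ) + 1 < m' + 1 := by have := r.1.isLt; omega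
        have h2 : ¬ (((r.1 + 1 : Fin (m' + 1)) : ℕ) = ((q.1 : ℕ) + 1) % (m' + 1)) := by
          rw [hv, Nat.mod_eq_of_lt hq1]
          omega
        rw [if_neg h1, if_neg h2]
  -- put it together
  have key : (-1 : R) ^ (m' * n) * T.det = (-1 : R) ^ (m' * n) * (p (m' + 1) - 1).det := by
    rw [← hTsub, hTsub2, ← pow_mul, mul_comm n m']
  have : T.det = (p (m' + 1) - 1).det := by
    have h2 := congrArg (fun x => (-1 : R) ^ (m' * n) * x) key
    simpa [← mul_assoc, ← pow_add, Even.neg_one_pow ⟨m' * n, rfl⟩] using h2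
  rw [hdetT, this, hpm]
end

section
/- Let $F$ be a field, $n \ge 1$, and let $B_1, \dots, B_m$ be invertible upper triangular $n \times n$ matrices over $F$ such that for every $i$ the diagonal entries of $B_i$ are $(B_i)_{jj} = \lambda_j$ for fixed $\lambda_1, \dots, \lambda_n \in F^\times$ with $\lambda_1 \lambda_2 \cdots \lambda_n = 1$. Let $\delta_1, \dots, \delta_m \in \{1,-1\}$, set $l = \delta_1 + \cdots + \delta_m$, and set $P = B_1^{\delta_1} \cdots B_m^{\delta_m}$. Then in the polynomial ring $F[Y]$, $\det(Y \cdot P - I_n) = Y^n + \sum_{k=1}^{n-1} \varepsilon_k\, Y^{n-k} + (-1)^n$, where $\varepsilon_k = (-1)^k \sum_{1 \le i_1 < \cdots < i_k \le n} \big(\lambda_1 \cdots \hat{\lambda}_{i_1} \cdots \hat{\lambda}_{i_k} \cdots \lambda_n\big)^l$, and $\hat{\lambda}_{i}$ means that $\lambda_{i}$ is omitted from the product. -/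
open Polynomial

section Aux
variable {F : Type*} [Field F] {n : ℕ}

lemma tri_diag_mul {A B : Matrix (Fin n) (Fin n) F} (hA : A.BlockTriangular id)
    (hB : B.BlockTriangular id) (j : Fin n) : (A * B) j j = A j j * B j j := by
  rw [Matrix.mul_apply]
  apply Finset.sum_eq_single_of_mem j (Finset.mem_univ j)
  intro k _ hk
  rcases lt_or_gt_of_ne hk with h | h
  · rw [hA h, zero_mul]
  · rw [hB h, mul_zero]

lemma zpow_tri (lam : Fin n → Fˣ) (g : GL (Fin n) F)
    (htri : (g : Matrix (Fin n) (Fin n) F).BlockTriangular id)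
    (hdiag : ∀ j, (g : Matrix (Fin n) (Fin n) F) j j = lam j)
    (e : ℤ) (he : e = 1 ∨ e = -1) :
    ((g ^ e : GL (Fin n) F) : Matrix (Fin n) (Fin n) F).BlockTriangular id ∧
      ∀ j, ((g ^ e : GL (Fin n) F) : Matrix (Fin n) (Fin n) F) j j = ((lam j ^ e : Fˣ) : F) := by
  rcases he with he | he
  · subst he
    simpa using ⟨htri, hdiag⟩
  · subst he
    simp only [_root_.zpow_neg_one]
    haveI : Invertible (g : Matrix (Fin n) (Fin n) F) := g.invertible
    have hcoe : ((g⁻¹ : GL (Fin n) F) : Matrix (Fin n) (Fin n) F)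
        = (g : Matrix (Fin n) (Fin n) F)⁻¹ := Matrix.coe_units_inv g
    have htri' : ((g⁻¹ : GL (Fin n) F) : Matrix (Fin n) (Fin n) F).BlockTriangular id := by
      rw [hcoe]; exact Matrix.blockTriangular_inv_of_blockTriangular htri
    refine ⟨htri', fun j => ?_⟩
    have h1 : ((g : Matrix (Fin n) (Fin n) F) * ((g⁻¹ : GL (Fin n) F) : Matrix (Fin n) (Fin n) F))
        = 1 := by
      rw [← Units.val_mul, mul_inv_cancel, Units.val_one]
    have h2 := tri_diag_mul htri htri' j
    rw [h1, Matrix.one_apply_eq, hdiag] at h2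
    have := inv_eq_of_mul_eq_one_right h2.symm
    rw [← this, Units.val_inv_eq_inv_val]

lemma prod_tri (lam : Fin n → Fˣ) :
    ∀ (m : ℕ) (B : Fin m → GL (Fin n) F),
      (∀ i, ((B i : Matrix (Fin n) (Fin n) F)).BlockTriangular id) →
      (∀ i j, (B i : Matrix (Fin n) (Fin n) F) j j = (lam j : F)) →
      ∀ (δ : Fin m → ℤ), (∀ i, δ i = 1 ∨ δ i = -1) →
      (((List.ofFn fun i => B i ^ δ i).prod : GL (Fin n) F) :
          Matrix (Fin n) (Fin n) F).BlockTriangular id ∧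
        ∀ j, (((List.ofFn fun i => B i ^ δ i).prod : GL (Fin n) F) :
          Matrix (Fin n) (Fin n) F) j j = ((lam j ^ (∑ i, δ i) : Fˣ) : F) := by
  intro m
  induction m with
  | zero =>
    intro B _ _ δ _
    simp [Matrix.blockTriangular_one, Matrix.one_apply_eq]
  | succ m ih =>
    intro B htri hdiag δ hδ
    have step := zpow_tri lam (B 0) (htri 0) (hdiag 0) (δ 0) (hδ 0)
    have tail := ih (fun i => B i.succ) (fun i => htri i.succ) (fun i j => hdiag i.succ j)
      (fun i => δ i.succ) (fun i => hδ i.succ)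
    have hsplit : (List.ofFn fun i : Fin (m+1) => B i ^ δ i).prod
        = (B 0 ^ δ 0) * (List.ofFn fun i : Fin m => B i.succ ^ δ i.succ).prod := by
      rw [List.ofFn_succ, List.prod_cons]
    rw [hsplit]
    rw [Units.val_mul]
    constructor
    · exact Matrix.BlockTriangular.mul step.1 tail.1
    · intro j
      rw [tri_diag_mul step.1 tail.1 j, step.2 j, tail.2 j, ← Units.val_mul, ← _root_.zpow_add,
        ← Fin.sum_univ_succ]

end Aux

section Key
variable {F : Type*} [Field F]

lemma key_prod (n : ℕ) (hn : 1 ≤ n) (lam : Fin n → Fˣ) (hlam : ∏ j, lam j = 1) (l : ℤ) :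
    ∏ j, ((Polynomial.X : F[X]) * Polynomial.C ((lam j ^ l : Fˣ) : F) - 1) =
      (Polynomial.X : F[X]) ^ n
        + ∑ k ∈ Finset.Ico 1 n,
            Polynomial.C ((-1 : F) ^ k *
              ∑ s ∈ Finset.powersetCard k (Finset.univ : Finset (Fin n)),
                (((∏ j ∈ sᶜ, lam j) ^ l : Fˣ) : F))
          * (Polynomial.X : F[X]) ^ (n - k)
        + (-1) ^ n := by
  classical
  set a : Fin n → F := fun j => ((lam j ^ l : Fˣ) : F) with ha
  have hprod : ∀ t : Finset (Fin n), ∏ j ∈ t, a j = (((∏ j ∈ t, lam j) ^ l : Fˣ) : F) := by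
    intro t
    rw [← Finset.prod_zpow]
    exact (map_prod (Units.coeHom F) (fun j => lam j ^ l) t).symm
  have hcard : (Finset.univ : Finset (Fin n)).card = n := by simp
  have expand : ∏ j, ((Polynomial.X : F[X]) * Polynomial.C (a j) - 1) =
      ∑ t ∈ (Finset.univ : Finset (Fin n)).powerset,
        Polynomial.C (∏ j ∈ t, a j) * ((Polynomial.X : F[X]) ^ t.card * (-1) ^ (n - t.card)) := by
    have h := Finset.prod_add (fun j => (Polynomial.X : F[X]) * Polynomial.C (a j))
      (fun _ => (-1 : F[X])) (Finset.univ : Finset (Fin n))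
    simp only [sub_eq_add_neg]
    rw [h]
    refine Finset.sum_congr rfl fun t _ => ?_
    rw [Finset.prod_mul_distrib, Finset.prod_const, Finset.prod_const, map_prod,
      Finset.card_sdiff_of_subset (Finset.subset_univ t), hcard]
    ring
  rw [expand]
  have hsplit := Finset.powerset_card_disjiUnion (Finset.univ : Finset (Fin n))
  rw [hsplit]; erw [Finset.sum_disjiUnion]
  simp only [hcard]
  have hG : ∀ k, ∑ t ∈ Finset.powersetCard k (Finset.univ : Finset (Fin n)),
      Polynomial.C (∏ j ∈ t, a j) * ((Polynomial.X : F[X]) ^ t.card * (-1) ^ (n - t.card))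
      = ∑ t ∈ Finset.powersetCard k (Finset.univ : Finset (Fin n)),
      Polynomial.C (∏ j ∈ t, a j) * ((Polynomial.X : F[X]) ^ k * (-1) ^ (n - k)) := by
    intro k
    refine Finset.sum_congr rfl fun t ht => ?_
    rw [Finset.mem_powersetCard_univ.1 ht]
  simp only [hG]
  rw [Finset.sum_range_succ, Finset.range_eq_Ico,
    Finset.sum_eq_sum_Ico_succ_bot (lt_of_lt_of_le Nat.zero_lt_one hn)]
  have h0 : ∑ t ∈ Finset.powersetCard 0 (Finset.univ : Finset (Fin n)),
      Polynomial.C (∏ j ∈ t, a j) * ((Polynomial.X : F[X]) ^ 0 * (-1) ^ (n - 0)) = (-1) ^ n := by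
    simp [Finset.powersetCard_zero]
  have hntop : ∑ t ∈ Finset.powersetCard n (Finset.univ : Finset (Fin n)),
      Polynomial.C (∏ j ∈ t, a j) * ((Polynomial.X : F[X]) ^ n * (-1) ^ (n - n)) =
      (Polynomial.X : F[X]) ^ n := by
    have hself := Finset.powersetCard_self (Finset.univ : Finset (Fin n))
    rw [hcard] at hself
    rw [hself, Finset.sum_singleton, hprod, hlam, _root_.one_zpow, Units.val_one]
    simp
  rw [h0, hntop]
  have hmid : ∑ k ∈ Finset.Ico 1 n,
      ∑ t ∈ Finset.powersetCard k (Finset.univ : Finset (Fin n)),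
        Polynomial.C (∏ j ∈ t, a j) * ((Polynomial.X : F[X]) ^ k * (-1) ^ (n - k)) =
      ∑ k ∈ Finset.Ico 1 n,
        Polynomial.C ((-1 : F) ^ k *
          ∑ s ∈ Finset.powersetCard k (Finset.univ : Finset (Fin n)),
            (((∏ j ∈ sᶜ, lam j) ^ l : Fˣ) : F))
        * (Polynomial.X : F[X]) ^ (n - k) := by
    refine Finset.sum_nbij' (fun k => n - k) (fun k => n - k)
      (fun k hk => ?_) (fun k hk => ?_) (fun k hk => ?_) (fun k hk => ?_) (fun k hk => ?_)
    · simp only [Finset.mem_Ico, hcard] at hk ⊢; omega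
    · simp only [Finset.mem_Ico, hcard] at hk ⊢; omega
    · simp only [Finset.mem_Ico, hcard] at hk ⊢; omega
    · simp only [Finset.mem_Ico, hcard] at hk ⊢; omega
    · simp only [Finset.mem_Ico, hcard] at hk
      have hkn : n - (n - k) = k := by omega
      have hinner : ∑ s ∈ Finset.powersetCard (n - k) (Finset.univ : Finset (Fin n)),
          (((∏ j ∈ sᶜ, lam j) ^ l : Fˣ) : F) =
          ∑ t ∈ Finset.powersetCard k (Finset.univ : Finset (Fin n)),
          (((∏ j ∈ t, lam j) ^ l : Fˣ) : F) := by
        refine Finset.sum_nbij' (fun s => sᶜ) (fun t => tᶜ)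
          (fun s hs => ?_) (fun t ht => ?_) (fun s _ => by simp) (fun t _ => by simp)
          (fun s _ => rfl)
        · rw [Finset.mem_powersetCard_univ] at hs ⊢
          rw [Finset.card_compl, hs, Fintype.card_fin]
          omega
        · rw [Finset.mem_powersetCard_univ] at ht ⊢
          rw [Finset.card_compl, ht, Fintype.card_fin]
      rw [hkn, hinner]
      simp only [hprod]
      rw [← Finset.sum_mul, ← map_sum, _root_.map_mul, _root_.map_pow, Polynomial.C_neg,
        Polynomial.C_1]
      ring
  rw [hmid]
  ring

end Key


/-- Let `B₁, …, Bₘ` be invertible upper triangular `n × n` matrices over a field with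
common diagonal entries `λ₁, …, λₙ` satisfying `λ₁ ⋯ λₙ = 1`, let `δᵢ ∈ {1,-1}`,
`l = δ₁ + ⋯ + δₘ` and `P = B₁^{δ₁} ⋯ Bₘ^{δₘ}`. Then in `F[Y]`,
`det (Y·P - Iₙ) = Yⁿ + ∑_{k=1}^{n-1} εₖ Y^{n-k} + (-1)ⁿ` where
`εₖ = (-1)ᵏ ∑_{i₁<⋯<iₖ} (λ₁ ⋯ λ̂_{i₁} ⋯ λ̂_{iₖ} ⋯ λₙ)^l`. -/
theorem det_X_smul_prod_upper_triangular {F : Type*} [Field F] (n m : ℕ) (hn : 1 ≤ n)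
    (lam : Fin n → Fˣ) (hlam : ∏ j, lam j = 1) (B : Fin m → GL (Fin n) F)
    (htri : ∀ i, ((B i : Matrix (Fin n) (Fin n) F)).BlockTriangular id)
    (hdiag : ∀ i j, (B i : Matrix (Fin n) (Fin n) F) j j = (lam j : F))
    (δ : Fin m → ℤ) (hδ : ∀ i, δ i = 1 ∨ δ i = -1) :
    ((Polynomial.X : F[X]) •
        ((List.ofFn fun i => B i ^ δ i).prod : Matrix (Fin n) (Fin n) F).map Polynomial.C
      - 1).det =
      (Polynomial.X : F[X]) ^ n
        + ∑ k ∈ Finset.Ico 1 n,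
            Polynomial.C ((-1 : F) ^ k *
              ∑ s ∈ Finset.powersetCard k (Finset.univ : Finset (Fin n)),
                (((∏ j ∈ sᶜ, lam j) ^ (∑ i, δ i) : Fˣ) : F))
          * (Polynomial.X : F[X]) ^ (n - k)
        + (-1) ^ n := by
  obtain ⟨hPtri, hPdiag⟩ := prod_tri lam m B htri hdiag δ hδ
  set P : Matrix (Fin n) (Fin n) F :=
    ((List.ofFn fun i => B i ^ δ i).prod : Matrix (Fin n) (Fin n) F) with hP
  have hMtri : ((Polynomial.X : F[X]) • P.map Polynomial.C - 1).BlockTriangular id := by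
    intro i j hij
    have hne : i ≠ j := fun h => by simp [h] at hij
    simp [Matrix.sub_apply, Matrix.smul_apply, Matrix.map_apply, Matrix.one_apply_ne hne,
      hPtri hij]
  rw [Matrix.det_of_upperTriangular hMtri]
  have hdiag' : ∀ i : Fin n, ((Polynomial.X : F[X]) • P.map Polynomial.C - 1) i i
      = (Polynomial.X : F[X]) * Polynomial.C ((lam i ^ (∑ i, δ i) : Fˣ) : F) - 1 := by
    intro i
    simp [Matrix.sub_apply, Matrix.smul_apply, Matrix.map_apply, Matrix.one_apply_eq,
      hPdiag i, smul_eq_mul]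
  calc ∏ i, ((Polynomial.X : F[X]) • P.map Polynomial.C - 1) i i
      = ∏ i, ((Polynomial.X : F[X]) * Polynomial.C ((lam i ^ (∑ i, δ i) : Fˣ) : F) - 1) :=
        Finset.prod_congr rfl fun i _ => hdiag' i
    _ = _ := key_prod n hn lam hlam (∑ i, δ i)
end
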